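/- Let f = h + conj(g) be a sense-preserving harmonic mapping in D with ||P_h|| < ∞. If ε₁, ε₂ belong to the closed unit disk with |ε₁| = |ε₂|, then ||P_{h+ε₁·conj(g)}|| = ||P_{h+ε₂·conj(g)}||. If |ε₁| ≠ |ε₂|, then | ||P_{h+ε₁·conj(g)}|| - ||P_{h+ε₂·conj(g)}|| | ≤ |ε₁| + |ε₂| < 2. -/

import Mathlib

open Complex Metric

/-- Pre-Schwarzian derivative of an analytic function. -/
noncomputable def pd (F : ℂ → ℂ) (z : ℂ) : ℂ := deriv (deriv F) z / deriv F z

/-- Dilatation of the harmonic mapping `h + conj g`. -/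
noncomputable def dil (h g : ℂ → ℂ) (z : ℂ) : ℂ := deriv g z / deriv h z

/-- Pre-Schwarzian derivative of the harmonic mapping `h + conj g`. -/
noncomputable def PH (h g : ℂ → ℂ) (z : ℂ) : ℂ :=
  pd h z - (starRingEnd ℂ) (dil h g z) * deriv (dil h g) z / ((1 - ‖dil h g z‖ ^ 2 : ℝ) : ℂ)

/-- Pre-Schwarzian norm. -/
noncomputable def pnorm (P : ℂ → ℂ) : ℝ :=
  ⨆ z : Metric.ball (0 : ℂ) 1, (1 - ‖(z : ℂ)‖ ^ 2) * ‖P (z : ℂ)‖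

/-- The range whose boundedness expresses finiteness of the pre-Schwarzian norm. -/
def pbdd (P : ℂ → ℂ) : Prop :=
  BddAbove (Set.range fun z : Metric.ball (0 : ℂ) 1 => (1 - ‖(z : ℂ)‖ ^ 2) * ‖P (z : ℂ)‖)

/-- `h + conj g` is a sense-preserving harmonic mapping in the unit disk. -/
def SPH (h g : ℂ → ℂ) : Prop :=
  DifferentiableOn ℂ h (Metric.ball (0 : ℂ) 1) ∧
  DifferentiableOn ℂ g (Metric.ball (0 : ℂ) 1) ∧ g 0 = 0 ∧
  ∀ z ∈ Metric.ball (0 : ℂ) 1, ‖deriv g z‖ < ‖deriv h z‖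

open Metric Set

lemma mob_normSq (c w : ℂ) :
    Complex.normSq (1 + (starRingEnd ℂ) c * w) - Complex.normSq (w + c)
      = (1 - Complex.normSq c) * (1 - Complex.normSq w) := by
  have : ((Complex.normSq (1 + (starRingEnd ℂ) c * w) - Complex.normSq (w + c) : ℝ) : ℂ)
      = ((1 - Complex.normSq c) * (1 - Complex.normSq w) : ℝ) := by
    push_cast
    rw [← Complex.mul_conj, ← Complex.mul_conj, ← Complex.mul_conj, ← Complex.mul_conj]
    simp only [map_add, map_mul, map_one, Complex.conj_conj]
    ring
  exact_mod_cast this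

lemma mob_normSq' (c w : ℂ) :
    ‖(1 + (starRingEnd ℂ) c * w)‖^2 - ‖w + c‖^2 = (1 - ‖c‖^2) * (1 - ‖w‖^2) := by
  have h := mob_normSq c w
  simp only [Complex.normSq_eq_norm_sq] at h
  exact h

lemma mob_ne (c w : ℂ) (hc : ‖c‖ < 1) (hw : ‖w‖ < 1) : 1 + (starRingEnd ℂ) c * w ≠ 0 := by
  intro h0
  have h := mob_normSq' c w
  rw [h0, norm_zero] at h
  have hc2 : ‖c‖^2 < 1 := by nlinarith [norm_nonneg c]
  have hw2 : ‖w‖^2 < 1 := by nlinarith [norm_nonneg w]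
  nlinarith [sq_nonneg ‖w + c‖]

lemma mob_maps (c w : ℂ) (hc : ‖c‖ < 1) (hw : ‖w‖ < 1) :
    ‖(w + c) / (1 + (starRingEnd ℂ) c * w)‖ < 1 := by
  rw [norm_div, div_lt_one]
  · apply lt_of_pow_lt_pow_left₀ 2 (norm_nonneg _)
    have h := mob_normSq' c w
    have hc2 : ‖c‖^2 < 1 := by nlinarith [norm_nonneg c]
    have hw2 : ‖w‖^2 < 1 := by nlinarith [norm_nonneg w]
    nlinarith []
  · exact (norm_pos_iff).2 (mob_ne c w hc hw)


lemma schwarz_pick (f : ℂ → ℂ) (hd : DifferentiableOn ℂ f (ball 0 1))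
    (hm : ∀ w ∈ ball (0:ℂ) 1, ‖f w‖ < 1) (z : ℂ) (hz : z ∈ ball (0:ℂ) 1) :
    (1 - ‖z‖^2) * ‖deriv f z‖ ≤ 1 - ‖f z‖^2 := by
  have hz1 : ‖z‖ < 1 := mem_ball_zero_iff.1 hz
  set a := f z with ha_def
  have ha : ‖a‖ < 1 := hm z hz
  have hna : ‖-a‖ < 1 := by simpa using ha
  set ψ : ℂ → ℂ := fun w => (w + z) / (1 + (starRingEnd ℂ) z * w) with hψdef
  set φ : ℂ → ℂ := fun u => (u + (-a)) / (1 + (starRingEnd ℂ) (-a) * u) with hφdef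
  set F : ℂ → ℂ := fun w => φ (f (ψ w)) with hFdef
  have hψmaps : ∀ w ∈ ball (0:ℂ) 1, ψ w ∈ ball (0:ℂ) 1 := fun w hw =>
    mem_ball_zero_iff.2 (mob_maps z w hz1 (mem_ball_zero_iff.1 hw))
  have hφmaps : ∀ u ∈ ball (0:ℂ) 1, φ u ∈ ball (0:ℂ) 1 := fun u hu =>
    mem_ball_zero_iff.2 (mob_maps (-a) u hna (mem_ball_zero_iff.1 hu))
  have hψdiff : DifferentiableOn ℂ ψ (ball 0 1) :=
    DifferentiableOn.div (by fun_prop) (by fun_prop)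
      (fun w hw => mob_ne z w hz1 (mem_ball_zero_iff.1 hw))
  have hφdiff : DifferentiableOn ℂ φ (ball 0 1) :=
    DifferentiableOn.div (by fun_prop) (by fun_prop)
      (fun u hu => mob_ne (-a) u hna (mem_ball_zero_iff.1 hu))
  have hfψmaps : Set.MapsTo (fun w => f (ψ w)) (ball (0:ℂ) 1) (ball (0:ℂ) 1) :=
    fun w hw => mem_ball_zero_iff.2 (hm _ (hψmaps w hw))
  have hFdiff : DifferentiableOn ℂ F (ball 0 1) :=
    DifferentiableOn.comp hφdiff
      (DifferentiableOn.comp hd hψdiff (fun w hw => hψmaps w hw)) hfψmaps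
  have hψ0 : ψ 0 = z := by rw [hψdef]; simp
  have hφa : φ a = 0 := by rw [hφdef]; simp
  have hF0 : F 0 = 0 := by rw [hFdef]; simp only [hψ0, ← ha_def, hφa]
  have hFmaps : Set.MapsTo F (ball 0 1) (ball (F 0) 1) := by
    rw [hF0]
    exact fun w hw => hφmaps _ (mem_ball_zero_iff.2 (hm _ (hψmaps w hw)))
  have hkey := Complex.norm_deriv_le_div_of_mapsTo_ball hFdiff (hFmaps.mono_right ball_subset_closedBall) one_pos
  -- compute deriv F 0
  have hψ' : HasDerivAt ψ (1 - z * (starRingEnd ℂ) z) 0 := by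
    have h1 : HasDerivAt (fun w : ℂ => w + z) 1 0 := by
      simpa using (hasDerivAt_id (0:ℂ)).add_const z
    have h2 : HasDerivAt (fun w : ℂ => 1 + (starRingEnd ℂ) z * w) ((starRingEnd ℂ) z) 0 := by
      simpa using ((hasDerivAt_id (0:ℂ)).const_mul ((starRingEnd ℂ) z)).const_add 1
    have hne : (1 + (starRingEnd ℂ) z * (0:ℂ)) ≠ 0 := by simp
    have h3 := h1.div h2 hne
    rw [hψdef]
    exact h3.congr_deriv (by simp)
  have haa : (1 + (starRingEnd ℂ) (-a) * a) ≠ 0 := mob_ne (-a) a hna ha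
  set D : ℂ := (1 * (1 + (starRingEnd ℂ) (-a) * a) - (a + -a) * (starRingEnd ℂ) (-a)) / (1 + (starRingEnd ℂ) (-a) * a)^2 with hD
  have hφ' : HasDerivAt φ D a := by
    have h1 : HasDerivAt (fun u : ℂ => u + (-a)) 1 a := by
      simpa using (hasDerivAt_id a).add_const (-a)
    have h2 : HasDerivAt (fun u : ℂ => 1 + (starRingEnd ℂ) (-a) * u) ((starRingEnd ℂ) (-a)) a := by
      simpa using ((hasDerivAt_id a).const_mul ((starRingEnd ℂ) (-a))).const_add 1
    exact h1.div h2 haa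
  have hfz : HasDerivAt f (deriv f z) z :=
    (hd.differentiableAt (isOpen_ball.mem_nhds hz)).hasDerivAt
  have hfψ : HasDerivAt (fun w => f (ψ w)) (deriv f z * (1 - z * (starRingEnd ℂ) z)) 0 := by
    have := HasDerivAt.comp 0 (hψ0 ▸ hfz) hψ'
    rw [hψ0] at this
    exact this
  have hF' : HasDerivAt F (D * (deriv f z * (1 - z * (starRingEnd ℂ) z))) 0 := by
    have hval : (fun w => f (ψ w)) 0 = a := by simp only [hψ0, ← ha_def]
    exact HasDerivAt.comp 0 (hval ▸ hφ') hfψ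
  have hnorm : ‖D * (deriv f z * (1 - z * (starRingEnd ℂ) z))‖ ≤ 1 := by
    have := hF'.deriv
    rw [this] at hkey
    simpa using hkey
  have e1 : 1 - z * (starRingEnd ℂ) z = ((1 - ‖z‖^2 : ℝ) : ℂ) := by
    rw [Complex.mul_conj]
    push_cast
    rw [Complex.normSq_eq_norm_sq]
    push_cast
    ring
  have e2 : 1 + (starRingEnd ℂ) (-a) * a = ((1 - ‖a‖^2 : ℝ) : ℂ) := by
    rw [map_neg, neg_mul, mul_comm, Complex.mul_conj]
    push_cast
    rw [Complex.normSq_eq_norm_sq]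
    push_cast
    ring
  have hza : (0:ℝ) < 1 - ‖z‖^2 := by nlinarith [norm_nonneg z]
  have haa2 : (0:ℝ) < 1 - ‖a‖^2 := by nlinarith [norm_nonneg a]
  have hX : (((1 - ‖a‖^2 : ℝ) : ℂ)) ≠ 0 := by
    exact_mod_cast (by positivity : (0:ℝ) < 1 - ‖a‖^2).ne'
  have hDval : D = (((1 - ‖a‖^2 : ℝ) : ℂ))⁻¹ := by
    rw [hD, e2]
    rw [add_neg_cancel, zero_mul, sub_zero, one_mul,
      show (((1 - ‖a‖^2 : ℝ) : ℂ))^2 = (((1 - ‖a‖^2 : ℝ) : ℂ)) * (((1 - ‖a‖^2 : ℝ) : ℂ)) from sq _]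
    exact div_mul_cancel_left₀ hX _
  have hnval : ‖D * (deriv f z * (1 - z * (starRingEnd ℂ) z))‖
      = (1 - ‖z‖^2) * ‖deriv f z‖ / (1 - ‖a‖^2) := by
    rw [hDval, e1, norm_mul, norm_mul, norm_inv, Complex.norm_real, Complex.norm_real,
      Real.norm_eq_abs, Real.norm_eq_abs, abs_of_pos hza, abs_of_pos haa2]
    field_simp
  rw [hnval] at hnorm
  calc (1 - ‖z‖^2) * ‖deriv f z‖
      = ((1 - ‖z‖^2) * ‖deriv f z‖ / (1 - ‖a‖^2)) * (1 - ‖a‖^2) :=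
        (div_mul_cancel₀ _ haa2.ne').symm
    _ ≤ 1 * (1 - ‖a‖^2) := mul_le_mul_of_nonneg_right hnorm haa2.le
    _ = 1 - ‖f z‖^2 := by rw [one_mul, ha_def]


noncomputable def QQ (h g : ℂ → ℂ) (r : ℝ) (z : ℂ) : ℂ :=
  pd h z - (r : ℂ) * ((starRingEnd ℂ) (dil h g z) * deriv (dil h g) z)
      / ((1 - r * ‖dil h g z‖ ^ 2 : ℝ) : ℂ)

lemma PH_eq_QQ (h g : ℂ → ℂ) (ε : ℂ) :
    PH h (fun w => (starRingEnd ℂ) ε * g w) = QQ h g (‖ε‖^2) := by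
  funext z
  have hdil : dil h (fun w => (starRingEnd ℂ) ε * g w) = fun z => (starRingEnd ℂ) ε * dil h g z := by
    funext z
    unfold dil
    rw [deriv_const_mul_field, mul_div_assoc]
  rw [PH, QQ, hdil]
  rw [deriv_const_mul_field]
  have e1 : (starRingEnd ℂ) ((starRingEnd ℂ) ε * dil h g z) * ((starRingEnd ℂ) ε * deriv (dil h g) z)
      = ((‖ε‖^2 : ℝ) : ℂ) * ((starRingEnd ℂ) (dil h g z) * deriv (dil h g) z) := by
    have : ε * (starRingEnd ℂ) ε = ((‖ε‖^2 : ℝ) : ℂ) := by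
      rw [Complex.mul_conj, Complex.normSq_eq_norm_sq]
    simp only [map_mul, Complex.conj_conj]
    rw [← this]; ring
  have e2 : ‖(starRingEnd ℂ) ε * dil h g z‖^2 = ‖ε‖^2 * ‖dil h g z‖^2 := by
    rw [norm_mul, RCLike.norm_conj, mul_pow]
  rw [e1, e2]

lemma sq_lt (a t : ℝ) (ha0 : 0 ≤ a) (ha1 : a ≤ 1) (ht0 : 0 ≤ t) (ht1 : t < 1) :
    0 < 1 - a^2*t^2 := by
  have h1 : a^2 ≤ 1 := by nlinarith
  have h2 : t^2 < 1 := by nlinarith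
  nlinarith [sq_nonneg t]

lemma real_key (a b t : ℝ) (ha0 : 0 ≤ a) (ha1 : a ≤ 1) (hb0 : 0 ≤ b) (hb1 : b ≤ 1)
    (ht0 : 0 ≤ t) (ht1 : t < 1) :
    |b^2/(1-b^2*t^2) - a^2/(1-a^2*t^2)| * (t*(1-t^2)) ≤ a + b := by
  have hda : 0 < 1 - a^2*t^2 := sq_lt a t ha0 ha1 ht0 ht1
  have hdb : 0 < 1 - b^2*t^2 := sq_lt b t hb0 hb1 ht0 ht1
  have haq : a^2 ≤ 1 := by nlinarith
  have hbq : b^2 ≤ 1 := by nlinarith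
  have hdiff : b^2/(1-b^2*t^2) - a^2/(1-a^2*t^2) = (b^2-a^2)/((1-b^2*t^2)*(1-a^2*t^2)) := by
    rw [div_sub_div _ _ hdb.ne' hda.ne']; ring
  rw [hdiff, abs_div, _root_.abs_of_pos (mul_pos hdb hda), div_mul_eq_mul_div,
    div_le_iff₀ (mul_pos hdb hda)]
  have ht2 : (0:ℝ) ≤ 1 - t^2 := by nlinarith
  rcases le_total a b with hab | hab
  · rw [_root_.abs_of_nonneg (by nlinarith : (0:ℝ) ≤ b^2 - a^2)]
    have h2 : (b-a)*t ≤ 1 - a^2*t^2 := by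
      nlinarith [mul_nonneg (mul_nonneg ha0 ht0) (sub_nonneg.2 ht1.le),
        mul_nonneg (sub_nonneg.2 ha1) (sub_nonneg.2 ht1.le)]
    have h3 : 1 - t^2 ≤ 1 - b^2*t^2 := by nlinarith [sq_nonneg t]
    have h1 : (b-a)*t*(1-t^2) ≤ (1-a^2*t^2)*(1-b^2*t^2) :=
      mul_le_mul h2 h3 ht2 hda.le
    nlinarith [mul_le_mul_of_nonneg_left h1 (by linarith : (0:ℝ) ≤ a + b)]
  · rw [abs_of_nonpos (by nlinarith : b^2 - a^2 ≤ 0)]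
    have h2 : (a-b)*t ≤ 1 - b^2*t^2 := by
      nlinarith [mul_nonneg (mul_nonneg hb0 ht0) (sub_nonneg.2 ht1.le),
        mul_nonneg (sub_nonneg.2 hb1) (sub_nonneg.2 ht1.le)]
    have h3 : 1 - t^2 ≤ 1 - a^2*t^2 := by nlinarith [sq_nonneg t]
    have h1 : (a-b)*t*(1-t^2) ≤ (1-b^2*t^2)*(1-a^2*t^2) :=
      mul_le_mul h2 h3 ht2 hdb.le
    nlinarith [mul_le_mul_of_nonneg_left h1 (by linarith : (0:ℝ) ≤ a + b)]

lemma QQ_rep (h g : ℂ → ℂ) (r : ℝ) (z : ℂ) :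
    QQ h g r z = pd h z - ((r / (1 - r * ‖dil h g z‖^2) : ℝ) : ℂ)
      * ((starRingEnd ℂ) (dil h g z) * deriv (dil h g) z) := by
  rw [QQ, Complex.ofReal_div, div_mul_eq_mul_div]

lemma QQ_diff_bound (h g : ℂ → ℂ) (a b : ℝ) (ha0 : 0 ≤ a) (ha1 : a ≤ 1)
    (hb0 : 0 ≤ b) (hb1 : b ≤ 1) (z : ℂ)
    (ht : ‖dil h g z‖ < 1)
    (hsp : (1 - ‖z‖^2) * ‖deriv (dil h g) z‖ ≤ 1 - ‖dil h g z‖^2)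
    (hz1 : ‖z‖ < 1) :
    (1 - ‖z‖^2) * ‖QQ h g (a^2) z - QQ h g (b^2) z‖ ≤ a + b := by
  have ht0 : (0:ℝ) ≤ ‖dil h g z‖ := norm_nonneg _
  have hdiff : QQ h g (a^2) z - QQ h g (b^2) z
      = (((b^2/(1-b^2*‖dil h g z‖^2) - a^2/(1-a^2*‖dil h g z‖^2) : ℝ)) : ℂ)
        * ((starRingEnd ℂ) (dil h g z) * deriv (dil h g) z) := by
    rw [QQ_rep, QQ_rep, Complex.ofReal_sub]
    ring
  rw [hdiff, norm_mul, Complex.norm_real, Real.norm_eq_abs, norm_mul, RCLike.norm_conj]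
  set t := ‖dil h g z‖
  set u := ‖deriv (dil h g) z‖
  calc (1 - ‖z‖^2) * (|b^2/(1-b^2*t^2) - a^2/(1-a^2*t^2)| * (t * u))
      = |b^2/(1-b^2*t^2) - a^2/(1-a^2*t^2)| * (t * ((1 - ‖z‖^2) * u)) := by ring
    _ ≤ |b^2/(1-b^2*t^2) - a^2/(1-a^2*t^2)| * (t * (1 - t^2)) := by
        apply mul_le_mul_of_nonneg_left _ (abs_nonneg _)
        exact mul_le_mul_of_nonneg_left hsp ht0
    _ ≤ a + b := real_key a b t ha0 ha1 hb0 hb1 ht0 ht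


theorem stmt3 (h g : ℂ → ℂ) (hf : SPH h g) (hfin : pbdd (pd h))
    (ε₁ ε₂ : ℂ) (hε₁ : ‖ε₁‖ ≤ 1) (hε₂ : ‖ε₂‖ ≤ 1) :
    (‖ε₁‖ = ‖ε₂‖ →
      pnorm (PH h (fun w => (starRingEnd ℂ) ε₁ * g w)) =
        pnorm (PH h (fun w => (starRingEnd ℂ) ε₂ * g w))) ∧
    (‖ε₁‖ ≠ ‖ε₂‖ →
      |pnorm (PH h (fun w => (starRingEnd ℂ) ε₁ * g w)) -
          pnorm (PH h (fun w => (starRingEnd ℂ) ε₂ * g w))| ≤ ‖ε₁‖ + ‖ε₂‖ ∧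
        ‖ε₁‖ + ‖ε₂‖ < 2) := by
  obtain ⟨hhd, hgd, hg0, hlt⟩ := hf
  have hh' : ∀ z ∈ ball (0:ℂ) 1, deriv h z ≠ 0 := by
    intro z hz h0
    have := hlt z hz
    rw [h0, norm_zero] at this
    exact (norm_nonneg _).not_gt this
  have hωlt : ∀ z ∈ ball (0:ℂ) 1, ‖dil h g z‖ < 1 := by
    intro z hz
    rw [dil, norm_div]
    have hpos : 0 < ‖deriv h z‖ := (norm_nonneg _).trans_lt (hlt z hz)
    exact (div_lt_one hpos).2 (hlt z hz)
  have hωdiff : DifferentiableOn ℂ (dil h g) (ball 0 1) := by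
    have hg' : AnalyticOnNhd ℂ (deriv g) (ball (0:ℂ) 1) := (hgd.analyticOnNhd isOpen_ball).deriv
    have hh'a : AnalyticOnNhd ℂ (deriv h) (ball (0:ℂ) 1) := (hhd.analyticOnNhd isOpen_ball).deriv
    exact hg'.differentiableOn.div hh'a.differentiableOn hh'
  have hsp : ∀ z ∈ ball (0:ℂ) 1, (1-‖z‖^2) * ‖deriv (dil h g) z‖ ≤ 1 - ‖dil h g z‖^2 :=
    fun z hz => schwarz_pick _ hωdiff hωlt z hz
  haveI : Nonempty ↥(Metric.ball (0:ℂ) 1) := ⟨⟨0, mem_ball_self one_pos⟩⟩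
  obtain ⟨M, hM⟩ := hfin
  have hQ0 : QQ h g ((0:ℝ)^2) = pd h := by
    funext z
    rw [QQ]
    norm_num
  have hbdd : ∀ c : ℝ, 0 ≤ c → c ≤ 1 →
      BddAbove (Set.range fun z : Metric.ball (0:ℂ) 1 => (1-‖(z:ℂ)‖^2)*‖QQ h g (c^2) (z:ℂ)‖) := by
    intro c hc0 hc1
    refine ⟨M + (c + 0), ?_⟩
    rintro x ⟨z, rfl⟩
    have hz := z.2
    have hz1 : ‖(z:ℂ)‖ < 1 := mem_ball_zero_iff.1 hz
    have hnn : (0:ℝ) ≤ 1-‖(z:ℂ)‖^2 := by nlinarith [norm_nonneg (z:ℂ)]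
    have h1 := QQ_diff_bound h g c 0 hc0 hc1 le_rfl zero_le_one (z:ℂ) (hωlt _ hz) (hsp _ hz) hz1
    rw [hQ0] at h1
    have h2 : ‖QQ h g (c^2) (z:ℂ)‖ ≤ ‖pd h (z:ℂ)‖ + ‖QQ h g (c^2) (z:ℂ) - pd h (z:ℂ)‖ := by
      have := norm_sub_norm_le (QQ h g (c^2) (z:ℂ)) (pd h (z:ℂ)); linarith
    have h3 := mul_le_mul_of_nonneg_left h2 hnn
    rw [mul_add] at h3
    have h4 : (1-‖(z:ℂ)‖^2)*‖pd h (z:ℂ)‖ ≤ M := hM ⟨z, rfl⟩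
    simp only []
    linarith
  have key : ∀ c d : ℝ, 0 ≤ c → c ≤ 1 → 0 ≤ d → d ≤ 1 →
      pnorm (QQ h g (c^2)) ≤ pnorm (QQ h g (d^2)) + (c + d) := by
    intro c d hc0 hc1 hd0 hd1
    rw [pnorm]
    apply ciSup_le
    intro z
    have hz := z.2
    have hz1 : ‖(z:ℂ)‖ < 1 := mem_ball_zero_iff.1 hz
    have hnn : (0:ℝ) ≤ 1-‖(z:ℂ)‖^2 := by nlinarith [norm_nonneg (z:ℂ)]
    have h1 := QQ_diff_bound h g c d hc0 hc1 hd0 hd1 (z:ℂ) (hωlt _ hz) (hsp _ hz) hz1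
    have h2 : ‖QQ h g (c^2) (z:ℂ)‖ ≤ ‖QQ h g (d^2) (z:ℂ)‖ + ‖QQ h g (c^2) (z:ℂ) - QQ h g (d^2) (z:ℂ)‖ := by
      have := norm_sub_norm_le (QQ h g (c^2) (z:ℂ)) (QQ h g (d^2) (z:ℂ)); linarith
    have h3 := mul_le_mul_of_nonneg_left h2 hnn
    rw [mul_add] at h3
    have h4 : (1-‖(z:ℂ)‖^2)*‖QQ h g (d^2) (z:ℂ)‖ ≤ pnorm (QQ h g (d^2)) := by
      rw [pnorm]
      exact le_ciSup (hbdd d hd0 hd1) z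
    linarith
  have hre1 := PH_eq_QQ h g ε₁
  have hre2 := PH_eq_QQ h g ε₂
  constructor
  · intro hab
    rw [hre1, hre2, hab]
  · intro hab
    constructor
    · rw [hre1, hre2]
      have k1 := key ‖ε₁‖ ‖ε₂‖ (norm_nonneg _) hε₁ (norm_nonneg _) hε₂
      have k2 := key ‖ε₂‖ ‖ε₁‖ (norm_nonneg _) hε₂ (norm_nonneg _) hε₁
      rw [abs_sub_le_iff]
      constructor <;> linarith
    · rcases (lt_or_gt_of_ne hab) with hlt2 | hlt2
      · linarith
      · linarith
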